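/- Let W : ℝ^{m×d} → [0,∞) and ℓ(r) := inf_{|z|=r} W(z) be its radial minimum. Then for every r > 0, sup_{|η| ≤ r} ℓ*(η) = sup_{|η| ≤ r} W*(η), where ℓ* denotes the Fenchel conjugate of the radial function ξ ↦ ℓ(|ξ|) and W* the Fenchel conjugate of W. -/

import Mathlib

open Set Filter

noncomputable section

/-- The Fenchel conjugate of a real-valued function on a real inner product space,
with values in `EReal`. -/
def fenchelConj {E : Type*} [NormedAddCommGroup E] [InnerProductSpace ℝ E]
    (f : E → ℝ) (η : E) : EReal :=
  ⨆ ξ : E, (((inner ℝ η ξ : ℝ) - f ξ : ℝ) : EReal)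

/-- Let `W : ℝ^{m×d} → [0,∞)` and let `ℓ(r) = inf_{‖z‖ = r} W z` be its radial minimum.
Then for every `r > 0` the supremum of the Fenchel conjugate of the radial function
`ξ ↦ ℓ(‖ξ‖)` over the ball `‖η‖ ≤ r` equals the corresponding supremum for `W*`. -/
lemma aux_stmt2 {E : Type*} [NormedAddCommGroup E] [InnerProductSpace ℝ E]
    (W : E → ℝ) (hW : ∀ ξ, 0 ≤ W ξ) (r : ℝ) (hr : 0 < r) :
    (⨆ (η : E) (_ : ‖η‖ ≤ r),
        fenchelConj (fun ξ => sInf {y : ℝ | ∃ z : E, ‖z‖ = ‖ξ‖ ∧ y = W z}) η) =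
      ⨆ (η : E) (_ : ‖η‖ ≤ r), fenchelConj W η := by
  set ℓ : E → ℝ := fun ξ => sInf {y : ℝ | ∃ z : E, ‖z‖ = ‖ξ‖ ∧ y = W z} with hℓ
  have hbdd : ∀ ξ : E, BddBelow {y : ℝ | ∃ z : E, ‖z‖ = ‖ξ‖ ∧ y = W z} := by
    intro ξ
    exact ⟨0, fun y ⟨z, _, hy⟩ => hy ▸ hW z⟩
  have hne : ∀ ξ : E, ({y : ℝ | ∃ z : E, ‖z‖ = ‖ξ‖ ∧ y = W z}).Nonempty := by
    intro ξ; exact ⟨W ξ, ξ, rfl, rfl⟩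
  set RHS := ⨆ (η : E) (_ : ‖η‖ ≤ r), fenchelConj W η with hRHS
  apply le_antisymm
  · apply iSup₂_le
    intro η hη
    apply iSup_le
    intro ξ
    refine le_of_forall_lt (fun x hx => ?_)
    -- key step: find a suitable η' and z with x < inner η' z - W z, ‖η'‖ ≤ r
    have key : ∃ (η' z : E), ‖η'‖ ≤ r ∧
        (x < (((inner ℝ η' z : ℝ) - W z : ℝ) : EReal)) := by
      induction x with
      | bot =>
          exact ⟨0, 0, by simpa using hr.le, bot_lt_iff_ne_bot.2 (by simp)⟩
      | coe x' =>
          have hx' : x' < (inner ℝ η ξ : ℝ) - ℓ ξ := by exact_mod_cast hx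
          set ε : ℝ := ((inner ℝ η ξ : ℝ) - ℓ ξ) - x' with hε
          have hεpos : 0 < ε := by simp only [hε]; linarith
          have : ∃ a ∈ {y : ℝ | ∃ z : E, ‖z‖ = ‖ξ‖ ∧ y = W z}, a < ℓ ξ + ε := by
            rw [← csInf_lt_iff (hbdd ξ) (hne ξ)]
            simpa [hℓ] using lt_add_of_pos_right (ℓ ξ) hεpos
          obtain ⟨a, ⟨z, hz, ha⟩, halt⟩ := this
          subst ha
          by_cases hz0 : z = 0
          · refine ⟨0, z, by simpa using hr.le, ?_⟩
            have hξ0 : ξ = 0 := by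
              have : ‖ξ‖ = 0 := by rw [← hz, hz0, norm_zero]
              exact norm_eq_zero.mp this
            have : x' < (inner ℝ (0 : E) z : ℝ) - W z := by
              have h1 : (inner ℝ η ξ : ℝ) = 0 := by rw [hξ0]; simp
              have h2 : (inner ℝ (0 : E) z : ℝ) = 0 := by simp
              rw [h2]; rw [h1] at hx'
              linarith [halt, hx']
            exact_mod_cast this
          · set η' : E := (‖η‖ / ‖z‖) • z with hη'
            have hznorm : 0 < ‖z‖ := norm_pos_iff.mpr hz0
            have hη'norm : ‖η'‖ = ‖η‖ := by
              rw [hη', norm_smul, Real.norm_eq_abs, abs_div, abs_norm, abs_norm,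
                div_mul_cancel₀ _ hznorm.ne']
            have hinner : (inner ℝ η' z : ℝ) = ‖η‖ * ‖z‖ := by
              rw [hη', real_inner_smul_left, real_inner_self_eq_norm_mul_norm,
                div_mul_eq_mul_div, mul_div_assoc, mul_div_cancel_left₀ _ hznorm.ne']
            have hCS : (inner ℝ η ξ : ℝ) ≤ ‖η‖ * ‖z‖ := by
              calc (inner ℝ η ξ : ℝ) ≤ ‖η‖ * ‖ξ‖ := real_inner_le_norm η ξ
                _ = ‖η‖ * ‖z‖ := by rw [hz]
            refine ⟨η', z, hη'norm ▸ hη, ?_⟩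
            have : x' < (inner ℝ η' z : ℝ) - W z := by
              rw [hinner]
              have := hx'
              simp only [hε] at halt ⊢
              linarith
            exact_mod_cast this
      | top =>
          exact absurd hx (by exact not_lt.mpr le_top)
    obtain ⟨η', z, hη'r, hlt⟩ := key
    calc x < (((inner ℝ η' z : ℝ) - W z : ℝ) : EReal) := hlt
      _ ≤ fenchelConj W η' := le_iSup (fun ξ => (((inner ℝ η' ξ : ℝ) - W ξ : ℝ) : EReal)) z
      _ ≤ RHS := le_iSup₂ (f := fun (η : E) (_ : ‖η‖ ≤ r) => fenchelConj W η) η' hη'r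
  · apply iSup₂_le
    intro η hη
    have hpt : fenchelConj W η ≤ fenchelConj ℓ η := by
      apply iSup_mono
      intro ξ
      have : ℓ ξ ≤ W ξ := csInf_le (hbdd ξ) ⟨ξ, rfl, rfl⟩
      exact_mod_cast (by linarith : (inner ℝ η ξ : ℝ) - W ξ ≤ (inner ℝ η ξ : ℝ) - ℓ ξ)
    exact hpt.trans (le_iSup₂ (f := fun (η : E) (_ : ‖η‖ ≤ r) => fenchelConj ℓ η) η hη)

theorem stmt2 (m d : ℕ) (hm : 0 < m) (hd : 0 < d)
    (W : EuclideanSpace ℝ (Fin m × Fin d) → ℝ) (hW : ∀ ξ, 0 ≤ W ξ) :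
    ∀ r : ℝ, 0 < r →
      (⨆ (η : EuclideanSpace ℝ (Fin m × Fin d)) (_ : ‖η‖ ≤ r),
          fenchelConj
            (fun ξ => sInf {y : ℝ | ∃ z : EuclideanSpace ℝ (Fin m × Fin d),
              ‖z‖ = ‖ξ‖ ∧ y = W z}) η) =
        ⨆ (η : EuclideanSpace ℝ (Fin m × Fin d)) (_ : ‖η‖ ≤ r), fenchelConj W η := by
  intro r hr
  exact aux_stmt2 W hW r hr
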